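/- Let Θ be an inner function and φ ∈ L²(𝕋). If the truncated Toeplitz operator A_φ^Θ is bounded on K_Θ, then A_{z^j φ}^Θ is bounded for every integer j. -/

import Mathlib

open MeasureTheory Complex Submodule
open scoped ENNReal
open scoped ComplexConjugate

noncomputable section

instance : Fact (0 < 2 * Real.pi) := ⟨by positivity⟩

abbrev 𝕋m := AddCircle (2 * Real.pi)
abbrev μT : Measure 𝕋m := AddCircle.haarAddCircle
abbrev L2 : Type := Lp ℂ 2 μT

open scoped Classical in
/-- Embedding of a.e.-defined functions into `L²`, with junk value `0` when not in `L²`. -/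
def toL2 (g : 𝕋m → ℂ) : L2 := if h : MemLp g 2 μT then h.toLp g else 0

/-- The coordinate function `z^j` on the circle. -/
def zc (j : ℤ) : 𝕋m → ℂ := fun x => fourier j x

/-- Pointwise product in `L²` (junk value if the product is not square integrable). -/
def mulL2 (f g : L2) : L2 := toL2 (fun x => f x * g x)

/-- Essential boundedness. -/
def BddAE (f : L2) : Prop := ∃ C : ℝ, ∀ᵐ x ∂μT, ‖f x‖ ≤ C

/-- The span of the negative frequencies. -/
def negSpan : Submodule ℂ L2 :=
  Submodule.span ℂ {f : L2 | ∃ n : ℤ, n < 0 ∧ f = fourierLp 2 n}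

/-- The Hardy space `H²` inside `L²(𝕋)`. -/
def H2 : Submodule ℂ L2 := negSpanᗮ

/-- The subspace `w·V` of `L²`. -/
def mulSet (w : 𝕋m → ℂ) (V : Submodule ℂ L2) : Submodule ℂ L2 :=
  Submodule.span ℂ {f : L2 | ∃ g ∈ V, f = toL2 (fun x => w x * g x)}

/-- The subspace `Θ·H²` of `L²`. -/
def SH2 (Θ : L2) : Submodule ℂ L2 := mulSet (⇑Θ) H2

/-- An inner function: a member of `H²` with unimodular boundary values. -/
def IsInner (Θ : L2) : Prop := Θ ∈ H2 ∧ ∀ᵐ x ∂μT, ‖Θ x‖ = 1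

/-- The model space `K_Θ = H² ⊖ ΘH²`, realized as an orthogonal complement. -/
def Ksp (Θ : L2) : Submodule ℂ L2 := (negSpan ⊔ SH2 Θ)ᗮ

instance KspComplete (Θ : L2) : CompleteSpace (Ksp Θ) :=
  inferInstanceAs (CompleteSpace ((negSpan ⊔ SH2 Θ)ᗮ))

instance KspHasProj (Θ : L2) : HasOrthogonalProjection (Ksp Θ) :=
  HasOrthogonalProjection.ofCompleteSpace (Ksp Θ)

/-- The orthogonal projection of `L²` onto `K_Θ`. -/
def PK (Θ : L2) : L2 →L[ℂ] Ksp Θ := orthogonalProjection (Ksp Θ)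

/-- The truncated Toeplitz operator with symbol `φ`, with values in `K_Θ`. -/
def TTOsub (Θ φ : L2) (f : L2) : Ksp Θ := PK Θ (toL2 (fun x => φ x * f x))

/-- The truncated Toeplitz operator with symbol `φ`, as an `L²`-valued map. -/
def TTO (Θ φ : L2) (f : L2) : L2 := (TTOsub Θ φ f : L2)

/-- `T` is the (necessarily bounded) extension of the truncated Toeplitz operator `A_φ^Θ`
from its dense domain `K_Θ ∩ H^∞`. -/
def ExtendsTTO (Θ φ : L2) (T : Ksp Θ →L[ℂ] Ksp Θ) : Prop :=
  ∀ f : Ksp Θ, BddAE (f : L2) → T f = TTOsub Θ φ (f : L2)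

/-- The truncated Toeplitz operator `A_φ^Θ` is bounded. -/
def IsBddTTO (Θ φ : L2) : Prop := ∃ T : Ksp Θ →L[ℂ] Ksp Θ, ExtendsTTO Θ φ T

/-- The truncated Toeplitz operator `A_φ^Θ` is zero (on its dense domain). -/
def TTOIsZero (Θ φ : L2) : Prop := ∀ f : L2, f ∈ Ksp Θ → BddAE f → TTO Θ φ f = 0

/-- `Θ(0)`, the value at the origin of the holomorphic extension. -/
def mval (f : L2) : ℂ := fourierCoeff (⇑f) 0

/-- `Θ'(0)`, the derivative at the origin of the holomorphic extension. -/
def dval (f : L2) : ℂ := fourierCoeff (⇑f) 1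

/-- The reproducing kernel `k_0^Θ` of `K_Θ` at `0`. -/
def k0 (Θ : L2) : L2 := toL2 (fun x => 1 - conj (mval Θ) * Θ x)

/-- The conjugate kernel `k̃_0^Θ = (Θ - Θ(0))/z`. -/
def kt0 (Θ : L2) : L2 := toL2 (fun x => (Θ x - mval Θ) * conj (zc 1 x))

/-- The power `B^j` (boundary values; for `j < 0` this is the conjugate power a.e.). -/
def BpowL2 (B : L2) (j : ℤ) : L2 := toL2 (fun x => B x ^ j)

/-- The composition `f ∘ B` determined by `z^j ↦ B^j`:  `f∘B = ∑ c_j(f) B^j`. -/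
def compB (B f : L2) : L2 := ∑' j : ℤ, fourierCoeff (⇑f) j • BpowL2 B j

/-- The concrete realization of the Hilbert tensor product `K_B ⊗ L²` as `ℓ²(ℤ, K_B)`,
via the Fourier basis of the second factor. -/
abbrev TensKB (B : L2) : Type := lp (fun _ : ℤ => Ksp B) 2

/-- The elementary tensor `h ⊗ f ∈ K_B ⊗ L²` in the realization `ℓ²(ℤ, K_B)`. -/
def elemTensor (B : L2) (h : Ksp B) (f : L2) : TensKB B :=
  ⟨fun j => fourierCoeff (⇑f) j • h, by
    apply memℓp_gen
    have h1 : Summable fun j : ℤ =>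
        ‖(fourierBasis (hT := ⟨by positivity⟩)).repr f j‖ ^ (2 : ℝ≥0∞).toReal :=
      (memℓp_gen_iff (by norm_num)).1 (lp.memℓp ((fourierBasis (hT := ⟨by positivity⟩)).repr f))
    have h2 := h1.mul_right (‖h‖ ^ (2 : ℝ≥0∞).toReal)
    apply Summable.congr h2
    intro j
    rw [fourierBasis_repr]
    rw [norm_smul, ← Real.mul_rpow (norm_nonneg _) (norm_nonneg _)]⟩

/-- The closed subspace `K_B ⊗ M` of `K_B ⊗ L² = ℓ²(ℤ, K_B)`. -/
def tensSp (B : L2) (M : Submodule ℂ L2) : Submodule ℂ (TensKB B) :=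
  (Submodule.span ℂ {x : TensKB B | ∃ h : Ksp B, ∃ f ∈ M, x = elemTensor B h f}).topologicalClosure

/-- The set of complex conjugates of the members of `V`. -/
def conjSM (V : Submodule ℂ L2) : Submodule ℂ L2 :=
  Submodule.span ℂ {f : L2 | ∃ g ∈ V, f = toL2 (fun x => conj (g x))}

/-- The kernel of the truncated Toeplitz operator `A_φ^Θ`, inside `K_Θ`. -/
def kerTTO (Θ φ : L2) : Submodule ℂ L2 :=
  Submodule.span ℂ {f : L2 | f ∈ Ksp Θ ∧ TTO Θ φ f = 0}


open scoped InnerProductSpace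

section Helpers

lemma toL2_coeFn {g : 𝕋m → ℂ} (h : MemLp g 2 μT) : ⇑(toL2 g) =ᵐ[μT] g := by
  rw [toL2, dif_pos h]; exact h.coeFn_toLp

lemma toL2_congr {g g' : 𝕋m → ℂ} (h : g =ᵐ[μT] g') : toL2 g = toL2 g' := by
  unfold toL2
  by_cases hg : MemLp g 2 μT
  · have hg' : MemLp g' 2 μT := hg.ae_eq h
    rw [dif_pos hg, dif_pos hg', hg.toLp_congr hg' h]
  · rw [dif_neg hg, dif_neg (fun hg' => hg (hg'.ae_eq h.symm))]

lemma toL2_coe (f : L2) : toL2 ⇑f = f := by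
  rw [toL2, dif_pos (Lp.memLp f)]; exact Lp.toLp_coeFn f (Lp.memLp f)

lemma toL2_add {g g' : 𝕋m → ℂ} (hg : MemLp g 2 μT) (hg' : MemLp g' 2 μT) :
    toL2 (fun x => g x + g' x) = toL2 g + toL2 g' := by
  simp only [show (fun x => g x + g' x) = g + g' from rfl]
  rw [toL2, toL2, toL2, dif_pos hg, dif_pos hg', dif_pos (hg.add hg')]
  exact MemLp.toLp_add hg hg'

lemma toL2_smul {g : 𝕋m → ℂ} (c : ℂ) (hg : MemLp g 2 μT) :
    toL2 (fun x => c * g x) = c • toL2 g := by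
  simp only [show (fun x => c * g x) = c • g from rfl]
  rw [toL2, toL2, dif_pos hg, dif_pos (hg.const_smul c)]
  exact (MemLp.toLp_const_smul c hg)

lemma inner_L2 (f g : L2) : ⟪f, g⟫_ℂ = ∫ x, conj (f x) * g x ∂μT := by
  rw [MeasureTheory.L2.inner_def]
  simp [RCLike.inner_apply]
  exact integral_congr_ae (ae_of_all _ fun x => mul_comm _ _)

lemma inner_fourierLp (n : ℤ) (f : L2) :
    ⟪(fourierLp 2 n : L2), f⟫_ℂ = fourierCoeff (⇑f) n := by
  rw [← fourierBasis_repr, HilbertBasis.repr_apply_apply, coe_fourierBasis]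

end Helpers

section Helpers2

lemma zc_norm (j : ℤ) (x : 𝕋m) : ‖zc j x‖ = 1 := by
  exact Circle.norm_coe _

lemma zc_conj (j : ℤ) (x : 𝕋m) : conj (zc j x) = zc (-j) x := by
  simp [zc, fourier_neg]

lemma zc_mul (j k : ℤ) (x : 𝕋m) : zc j x * zc k x = zc (j + k) x := by
  simp [zc, fourier_add]

lemma zc_cont (j : ℤ) : Continuous (zc j) := (fourier j).continuous

lemma memℒp_bddmul {w g : 𝕋m → ℂ} {C : ℝ} (hw : AEStronglyMeasurable w μT)
    (hg : MemLp g 2 μT) (hb : ∀ᵐ x ∂μT, ‖w x‖ ≤ C) :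
    MemLp (fun x => w x * g x) 2 μT := by
  refine hg.of_le_mul (c := C) (hw.mul hg.aestronglyMeasurable) ?_
  filter_upwards [hb] with x hx
  rw [norm_mul]
  exact mul_le_mul_of_nonneg_right hx (norm_nonneg _)

lemma memℒp_zc_mul (j : ℤ) (f : L2) : MemLp (fun x => zc j x * f x) 2 μT :=
  memℒp_bddmul (zc_cont j).aestronglyMeasurable (Lp.memLp f)
    (ae_of_all μT fun x => le_of_eq (zc_norm j x))

lemma memℒp_conj {g : 𝕋m → ℂ} (hg : MemLp g 2 μT) :
    MemLp (fun x => conj (g x)) 2 μT := by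
  have hc : AEStronglyMeasurable (fun x => conj (g x)) μT := by
    have := Complex.conjCLE.continuous.comp_aestronglyMeasurable hg.aestronglyMeasurable
    exact this.congr (ae_of_all μT fun x => by simp)
  refine hg.of_le_mul (c := 1) hc (ae_of_all μT fun x => by simp)

-- Fourier coefficient basics
lemma fourierCoeff_zc_mul (k n : ℤ) (g : 𝕋m → ℂ) :
    fourierCoeff (fun x => zc k x * g x) n = fourierCoeff g (n - k) := by
  unfold fourierCoeff
  refine integral_congr_ae (ae_of_all μT fun x => ?_)
  have h' : -n + k = -(n - k) := by ring
  simp only [smul_eq_mul, zc]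
  rw [← mul_assoc, ← fourier_add, h']

lemma fourierCoeff_conj_fn (g : 𝕋m → ℂ) (n : ℤ) :
    fourierCoeff (fun x => conj (g x)) n = conj (fourierCoeff g (-n)) := by
  unfold fourierCoeff
  rw [← integral_conj]
  refine integral_congr_ae (ae_of_all μT fun x => ?_)
  simp only [smul_eq_mul, map_mul, neg_neg, ← fourier_neg]

-- Parseval-type vanishing
lemma inner_eq_zero_of_coeff (f g : L2)
    (h : ∀ n : ℤ, fourierCoeff (⇑f) n = 0 ∨ fourierCoeff (⇑g) n = 0) :
    ⟪f, g⟫_ℂ = 0 := by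
  have hb := HilbertBasis.tsum_inner_mul_inner (fourierBasis (T := 2 * Real.pi)) f g
  rw [← hb]
  have : ∀ n : ℤ, ⟪f, fourierBasis (T := 2 * Real.pi) n⟫_ℂ *
      ⟪fourierBasis (T := 2 * Real.pi) n, g⟫_ℂ = 0 := by
    intro n
    have h1 : (fourierBasis (T := 2 * Real.pi)) n = (fourierLp 2 n : L2) := by
      rw [← coe_fourierBasis]
    rcases h n with h | h
    · rw [← inner_conj_symm, h1, inner_fourierLp, h, map_zero, zero_mul]
    · rw [h1, inner_fourierLp, h, mul_zero]
  simp only [this, tsum_zero]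

-- orthogonality to a span via generators
lemma mem_span_orthogonal_of {S : Set L2} {v : L2} (h : ∀ u ∈ S, ⟪u, v⟫_ℂ = 0) :
    v ∈ (Submodule.span ℂ S)ᗮ := by
  rw [Submodule.mem_orthogonal]
  intro u hu
  have hle : Submodule.span ℂ S ≤ LinearMap.ker ((innerSL ℂ v : L2 →L[ℂ] ℂ) : L2 →ₗ[ℂ] ℂ) := by
    rw [Submodule.span_le]
    intro u' hu'
    simp only [SetLike.mem_coe, LinearMap.mem_ker, ContinuousLinearMap.coe_coe, innerSL_apply_apply]
    rw [← inner_conj_symm, h u' hu', map_zero]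
  have := hle hu
  simp only [LinearMap.mem_ker, ContinuousLinearMap.coe_coe, innerSL_apply_apply] at this
  rw [← inner_conj_symm, this, map_zero]

lemma Ksp_orth {Θ f : L2} (hf : f ∈ Ksp Θ) {u : L2} (hu : u ∈ negSpan ⊔ SH2 Θ) :
    ⟪u, f⟫_ℂ = 0 := (Submodule.mem_orthogonal _ f).1 hf u hu

lemma Ksp_coeff {Θ f : L2} (hf : f ∈ Ksp Θ) {n : ℤ} (hn : n < 0) :
    fourierCoeff (⇑f) n = 0 := by
  rw [← inner_fourierLp]
  exact Ksp_orth hf (Submodule.mem_sup_left (Submodule.subset_span ⟨n, hn, rfl⟩))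

lemma Ksp_orth_SH2 {Θ f : L2} (hf : f ∈ Ksp Θ) {g : L2} (hg : g ∈ H2) :
    ⟪toL2 (fun x => Θ x * g x), f⟫_ℂ = 0 :=
  Ksp_orth hf (Submodule.mem_sup_right (Submodule.subset_span ⟨g, hg, rfl⟩))

lemma H2_coeff {f : L2} (hf : f ∈ H2) {n : ℤ} (hn : n < 0) :
    fourierCoeff (⇑f) n = 0 := by
  rw [← inner_fourierLp]
  exact hf _ (Submodule.subset_span ⟨n, hn, rfl⟩)

lemma mem_H2_of_coeff {f : L2} (h : ∀ n : ℤ, n < 0 → fourierCoeff (⇑f) n = 0) :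
    f ∈ H2 := by
  refine mem_span_orthogonal_of ?_
  rintro u ⟨n, hn, rfl⟩
  rw [inner_fourierLp]
  exact h n hn

lemma fourierLp_mem_H2 {m : ℤ} (hm : 0 ≤ m) : (fourierLp 2 m : L2) ∈ H2 := by
  refine mem_H2_of_coeff fun n hn => ?_
  rw [← inner_fourierLp]
  have := orthonormal_fourier (T := 2 * Real.pi)
  rw [orthonormal_iff_ite] at this
  rw [this n m, if_neg (by omega)]

end Helpers2

section MulZ

/-- Multiplication by `z^j` as a linear map on `L²`. -/
def mulzLin (j : ℤ) : L2 →ₗ[ℂ] L2 where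
  toFun f := toL2 (fun x => zc j x * f x)
  map_add' f g := by
    rw [← toL2_add (memℒp_zc_mul j f) (memℒp_zc_mul j g)]
    refine toL2_congr ?_
    filter_upwards [Lp.coeFn_add f g] with x hx
    rw [hx]; simp [mul_add]
  map_smul' c f := by
    simp only [RingHom.id_apply]
    rw [← toL2_smul c (memℒp_zc_mul j f)]
    refine toL2_congr ?_
    filter_upwards [Lp.coeFn_smul c f] with x hx
    rw [hx]; simp; ring

lemma mulzLin_norm (j : ℤ) (f : L2) : ‖mulzLin j f‖ ≤ 1 * ‖f‖ := by
  rw [one_mul, mulzLin]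
  simp only [LinearMap.coe_mk, AddHom.coe_mk]
  rw [toL2, dif_pos (memℒp_zc_mul j f), Lp.norm_toLp, Lp.norm_def]
  refine ENNReal.toReal_mono (Lp.eLpNorm_ne_top f) ?_
  refine eLpNorm_mono_ae (ae_of_all μT fun x => ?_)
  rw [norm_mul, zc_norm, one_mul]

/-- Multiplication by `z^j` as a continuous linear map on `L²`. -/
def mulzL (j : ℤ) : L2 →L[ℂ] L2 := LinearMap.mkContinuous (mulzLin j) 1 (mulzLin_norm j)

lemma mulzL_coeFn (j : ℤ) (f : L2) : ⇑(mulzL j f) =ᵐ[μT] fun x => zc j x * f x :=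
  toL2_coeFn (memℒp_zc_mul j f)

lemma mulzL_coeff (j : ℤ) (f : L2) (n : ℤ) :
    fourierCoeff (⇑(mulzL j f)) n = fourierCoeff (⇑f) (n - j) := by
  rw [fourierCoeff_congr_ae (mulzL_coeFn j f), fourierCoeff_zc_mul]

lemma mulzL_mem_H2 {h : L2} (hh : h ∈ H2) : mulzL 1 h ∈ H2 := by
  refine mem_H2_of_coeff fun n hn => ?_
  rw [mulzL_coeff]
  exact H2_coeff hh (by omega)

end MulZ

section Memberships

lemma inner_fourier_fourier (n m : ℤ) :
    ⟪(fourierLp 2 n : L2), (fourierLp 2 m : L2)⟫_ℂ = if n = m then 1 else 0 := by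
  have := orthonormal_fourier (T := 2 * Real.pi)
  rw [orthonormal_iff_ite] at this
  exact this n m

lemma unimod_conj_mul {z : ℂ} (h : ‖z‖ = 1) : conj z * z = 1 := by
  rw [mul_comm, Complex.mul_conj, Complex.normSq_eq_norm_sq, h]
  norm_num

lemma aesm_conj (Θ : L2) : AEStronglyMeasurable (fun x => conj (Θ x)) μT := by
  have := Complex.conjCLE.continuous.comp_aestronglyMeasurable (Lp.aestronglyMeasurable Θ)
  exact this.congr (ae_of_all μT fun x => by simp)

lemma one_mem_H2 : (fourierLp 2 0 : L2) ∈ H2 := fourierLp_mem_H2 le_rfl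

lemma memℒp_theta_mul {Θ : L2} (hΘ : IsInner Θ) (g : L2) :
    MemLp (fun x => Θ x * g x) 2 μT :=
  memℒp_bddmul (Lp.aestronglyMeasurable Θ) (Lp.memLp g) (hΘ.2.mono fun _ hx => le_of_eq hx)

lemma Theta_mem_SH2 {Θ : L2} : Θ ∈ SH2 Θ := by
  have h1 : toL2 (fun x => Θ x * (fourierLp 2 0 : L2) x) = Θ := by
    conv_rhs => rw [← toL2_coe Θ]
    refine toL2_congr ?_
    filter_upwards [coeFn_fourierLp 2 0] with x hx
    rw [hx, fourier_zero, mul_one]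
  exact Submodule.subset_span ⟨fourierLp 2 0, one_mem_H2, h1.symm⟩

lemma mem_Ksp_of {Θ v : L2} (h1 : ∀ n : ℤ, n < 0 → ⟪(fourierLp 2 n : L2), v⟫_ℂ = 0)
    (h2 : ∀ g : L2, g ∈ H2 → ⟪toL2 (fun x => Θ x * g x), v⟫_ℂ = 0) : v ∈ Ksp Θ := by
  rw [Ksp, ← Submodule.inf_orthogonal]
  constructor
  · exact mem_span_orthogonal_of (by rintro u ⟨n, hn, rfl⟩; exact h1 n hn)
  · exact mem_span_orthogonal_of (by rintro u ⟨g, hg, rfl⟩; exact h2 g hg)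

lemma coeff0_theta_zh {Θ h : L2} (hΘ : IsInner Θ) (hh : h ∈ H2) :
    fourierCoeff (fun x => Θ x * (mulzL 1 h) x) 0 = 0 := by
  have hcθ : MemLp (fun x => conj (Θ x)) 2 μT := memℒp_conj (Lp.memLp Θ)
  have key : ⟪toL2 (fun x => conj (Θ x)), mulzL 1 h⟫_ℂ = 0 := by
    refine inner_eq_zero_of_coeff _ _ fun n => ?_
    rcases le_or_gt n 0 with hn | hn
    · right; rw [mulzL_coeff]; exact H2_coeff hh (by omega)
    · left
      rw [fourierCoeff_congr_ae (toL2_coeFn hcθ), fourierCoeff_conj_fn,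
        H2_coeff hΘ.1 (by omega), map_zero]
  rw [inner_L2] at key
  rw [← key]
  unfold fourierCoeff
  refine integral_congr_ae ?_
  filter_upwards [toL2_coeFn hcθ] with x hx
  rw [hx]
  simp [smul_eq_mul, fourier_zero]

lemma down_mem {Θ f : L2} (hΘ : IsInner Θ) (hf : f ∈ Ksp Θ) :
    mulzL (-1) f - fourierCoeff (⇑f) 0 • (fourierLp 2 (-1) : L2) ∈ Ksp Θ := by
  refine mem_Ksp_of ?_ ?_
  · intro n hn
    rw [inner_sub_right, inner_smul_right, inner_fourierLp, mulzL_coeff,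
      inner_fourier_fourier]
    by_cases hn1 : n = -1
    · subst hn1; norm_num
    · rw [if_neg hn1, mul_zero, Ksp_coeff hf (show n - (-1) < 0 by omega), sub_zero]
  · intro g hg
    have hΘg : MemLp (fun x => Θ x * g x) 2 μT := memℒp_theta_mul hΘ g
    have hΘzg : MemLp (fun x => Θ x * (mulzL 1 g) x) 2 μT := memℒp_theta_mul hΘ _
    have horth : ⟪toL2 (fun x => Θ x * (mulzL 1 g) x), f⟫_ℂ = 0 :=
      Ksp_orth_SH2 hf (mulzL_mem_H2 hg)
    have hone : ⟪toL2 (fun x => Θ x * (mulzL 1 g) x), (fourierLp 2 0 : L2)⟫_ℂ = 0 := by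
      rw [← inner_conj_symm, inner_fourierLp, fourierCoeff_congr_ae (toL2_coeFn hΘzg),
        coeff0_theta_zh hΘ hg, map_zero]
    have t1 : ⟪toL2 (fun x => Θ x * g x), mulzL (-1) f⟫_ℂ
        = ⟪toL2 (fun x => Θ x * (mulzL 1 g) x), f⟫_ℂ := by
      rw [inner_L2, inner_L2]
      refine integral_congr_ae ?_
      filter_upwards [toL2_coeFn hΘg, toL2_coeFn hΘzg, mulzL_coeFn (-1) f, mulzL_coeFn 1 g]
        with x h1 h2 h3 h4
      rw [h1, h2, h3, h4]
      simp only [map_mul, zc_conj]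
      ring
    have t2 : ⟪toL2 (fun x => Θ x * g x), (fourierLp 2 (-1) : L2)⟫_ℂ
        = ⟪toL2 (fun x => Θ x * (mulzL 1 g) x), (fourierLp 2 0 : L2)⟫_ℂ := by
      rw [inner_L2, inner_L2]
      refine integral_congr_ae ?_
      filter_upwards [toL2_coeFn hΘg, toL2_coeFn hΘzg, coeFn_fourierLp 2 (-1),
        coeFn_fourierLp 2 0, mulzL_coeFn 1 g] with x h1 h2 h3 h4 h5
      rw [h1, h2, h3, h4, h5]
      simp only [map_mul, fourier_zero, mul_one]
      have : (fourier (-1) x : ℂ) = conj (zc 1 x) := by rw [zc_conj]; rfl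
      rw [this]
      ring
    rw [inner_sub_right, inner_smul_right, t1, t2, horth, hone, mul_zero, sub_zero]

lemma coeff_conjTheta_f {Θ f : L2} (hΘ : IsInner Θ) (hf : f ∈ Ksp Θ) {m : ℤ} (hm : 0 ≤ m) :
    fourierCoeff (fun x => conj (Θ x) * f x) m = 0 := by
  have hΘfm : MemLp (fun x => Θ x * (fourierLp 2 m : L2) x) 2 μT := memℒp_theta_mul hΘ _
  have h0 := Ksp_orth_SH2 hf (fourierLp_mem_H2 hm)
  rw [inner_L2] at h0
  rw [← h0]
  unfold fourierCoeff
  refine integral_congr_ae ?_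
  filter_upwards [toL2_coeFn hΘfm, coeFn_fourierLp 2 m] with x h1 h2
  rw [h1, h2]
  simp only [smul_eq_mul, map_mul, ← fourier_neg]
  ring

lemma up_mem {Θ f : L2} (hΘ : IsInner Θ) (hf : f ∈ Ksp Θ) :
    mulzL 1 f - (fourierCoeff (fun x => conj (Θ x) * f x) (-1)) • Θ ∈ Ksp Θ := by
  set d := fourierCoeff (fun x => conj (Θ x) * f x) (-1) with hd
  refine mem_Ksp_of ?_ ?_
  · intro n hn
    rw [inner_sub_right, inner_smul_right, inner_fourierLp, mulzL_coeff,
      inner_fourierLp, Ksp_coeff hf (show n - 1 < 0 by omega),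
      H2_coeff hΘ.1 hn, mul_zero, sub_zero]
  · intro g hg
    have hΘg : MemLp (fun x => Θ x * g x) 2 μT := memℒp_theta_mul hΘ g
    set v₁fn : 𝕋m → ℂ := fun x => conj (Θ x) * (zc 1 x * f x) with hv₁fn
    have hv₁ : MemLp v₁fn 2 μT :=
      memℒp_bddmul (aesm_conj Θ) (memℒp_zc_mul 1 f)
        (hΘ.2.mono fun x hx => by rw [RCLike.norm_conj]; exact le_of_eq hx)
    have hv : ⟪g, toL2 v₁fn - d • (fourierLp 2 0 : L2)⟫_ℂ = 0 := by
      refine inner_eq_zero_of_coeff _ _ fun n => ?_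
      rcases lt_or_ge n 0 with hn | hn
      · left; exact H2_coeff hg hn
      · right
        have hc : fourierCoeff ⇑(toL2 v₁fn - d • (fourierLp 2 0 : L2)) n
            = fourierCoeff v₁fn n - d * (if n = 0 then 1 else 0) := by
          rw [← inner_fourierLp, inner_sub_right, inner_smul_right, inner_fourierLp,
            fourierCoeff_congr_ae (toL2_coeFn hv₁), inner_fourier_fourier]
        have hshift : fourierCoeff v₁fn n = fourierCoeff (fun x => conj (Θ x) * f x) (n - 1) := by
          rw [show v₁fn = fun x => zc 1 x * (conj (Θ x) * f x) from funext fun x => by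
            simp only [hv₁fn]; ring]
          exact fourierCoeff_zc_mul 1 n _
        rw [hc, hshift]
        by_cases h0 : n = 0
        · subst h0; rw [if_pos rfl, mul_one]; simp [hd]
        · rw [if_neg h0, mul_zero, coeff_conjTheta_f hΘ hf (show (0:ℤ) ≤ n - 1 by omega),
            sub_zero]
    have t1 : ⟪toL2 (fun x => Θ x * g x), mulzL 1 f⟫_ℂ = ⟪g, toL2 v₁fn⟫_ℂ := by
      rw [inner_L2, inner_L2]
      refine integral_congr_ae ?_
      filter_upwards [toL2_coeFn hΘg, toL2_coeFn hv₁, mulzL_coeFn 1 f] with x h1 h2 h3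
      rw [h1, h2, h3]
      simp only [hv₁fn, map_mul]
      ring
    have t2 : ⟪toL2 (fun x => Θ x * g x), Θ⟫_ℂ = ⟪g, (fourierLp 2 0 : L2)⟫_ℂ := by
      rw [inner_L2, inner_L2]
      refine integral_congr_ae ?_
      filter_upwards [toL2_coeFn hΘg, coeFn_fourierLp 2 0, hΘ.2] with x h1 h2 h3
      rw [h1, h2, fourier_zero, map_mul, mul_one]
      have h4 : conj (Θ x) * Θ x = 1 := unimod_conj_mul h3
      calc conj (Θ x) * conj (g x) * Θ x = conj (g x) * (conj (Θ x) * Θ x) := by ring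
      _ = conj (g x) := by rw [h4, mul_one]
    rw [inner_sub_right, inner_smul_right, t1, t2, ← inner_smul_right, ← inner_sub_right]
    exact hv

lemma down_proj {Θ f : L2} (hΘ : IsInner Θ) (hf : f ∈ Ksp Θ) :
    (PK Θ (mulzL (-1) f) : L2)
      = mulzL (-1) f - fourierCoeff (⇑f) 0 • (fourierLp 2 (-1) : L2) := by
  show (Ksp Θ).starProjection (mulzL (-1) f) = _
  refine Submodule.eq_starProjection_of_mem_orthogonal'
    (z := fourierCoeff (⇑f) 0 • (fourierLp 2 (-1) : L2)) (down_mem hΘ hf) ?_ ?_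
  · refine Submodule.smul_mem _ _ (Submodule.le_orthogonal_orthogonal _ ?_)
    exact Submodule.mem_sup_left (Submodule.subset_span ⟨-1, by norm_num, rfl⟩)
  · abel

lemma up_proj {Θ f : L2} (hΘ : IsInner Θ) (hf : f ∈ Ksp Θ) :
    (PK Θ (mulzL 1 f) : L2)
      = mulzL 1 f - (fourierCoeff (fun x => conj (Θ x) * f x) (-1)) • Θ := by
  show (Ksp Θ).starProjection (mulzL 1 f) = _
  refine Submodule.eq_starProjection_of_mem_orthogonal'
    (z := (fourierCoeff (fun x => conj (Θ x) * f x) (-1)) • Θ) (up_mem hΘ hf) ?_ ?_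
  · refine Submodule.smul_mem _ _ (Submodule.le_orthogonal_orthogonal _ ?_)
    exact Submodule.mem_sup_right Theta_mem_SH2
  · abel

end Memberships

section Steps

lemma memℒp_mul_bdd {g w : 𝕋m → ℂ} {C : ℝ} (hg : MemLp g 2 μT)
    (hw : AEStronglyMeasurable w μT) (hb : ∀ᵐ x ∂μT, ‖w x‖ ≤ C) :
    MemLp (fun x => g x * w x) 2 μT :=
  (memℒp_bddmul hw hg hb).ae_eq (ae_of_all μT fun x => mul_comm _ _)

lemma d_eq (Θ f : L2) :
    fourierCoeff (fun x => conj (Θ x) * f x) (-1) = ⟪mulzL (-1) Θ, f⟫_ℂ := by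
  rw [inner_L2]
  unfold fourierCoeff
  refine integral_congr_ae ?_
  filter_upwards [mulzL_coeFn (-1) Θ] with x hx
  rw [hx]
  simp only [smul_eq_mul, map_mul, zc, ← fourier_neg, neg_neg]
  ring

lemma stepUp {Θ : L2} (hΘ : IsInner Θ) {φ : L2} (hb : IsBddTTO Θ φ) :
    IsBddTTO Θ (toL2 (fun x => zc 1 x * φ x)) := by
  obtain ⟨T, hT⟩ := hb
  set ψ : L2 := toL2 (fun x => zc 1 x * φ x) with hψdef
  have hψmem : MemLp (fun x => zc 1 x * φ x) 2 μT := memℒp_zc_mul 1 φ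
  set vΘ : Ksp Θ := PK Θ (toL2 (fun x => φ x * Θ x)) with hvΘ
  set Splus : Ksp Θ →L[ℂ] Ksp Θ := (PK Θ).comp ((mulzL 1).comp (Ksp Θ).subtypeL) with hSplus
  refine ⟨T.comp Splus +
    ContinuousLinearMap.smulRight ((innerSL ℂ (mulzL (-1) Θ)).comp (Ksp Θ).subtypeL) vΘ, ?_⟩
  intro f hbdd
  obtain ⟨C, hC⟩ := hbdd
  set d : ℂ := fourierCoeff (fun x => conj (Θ x) * (f : L2) x) (-1) with hd
  set uK : Ksp Θ := ⟨mulzL 1 (f : L2) - d • Θ, up_mem hΘ f.2⟩ with huK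
  have hSf : Splus f = uK := by
    refine Subtype.ext ?_
    rw [hSplus]
    simp only [ContinuousLinearMap.comp_apply, Submodule.subtypeL_apply]
    exact up_proj hΘ f.2
  have hcoe : ⇑((uK : Ksp Θ) : L2) =ᵐ[μT] fun x => zc 1 x * (f : L2) x - d * Θ x := by
    filter_upwards [Lp.coeFn_sub (mulzL 1 (f : L2)) (d • Θ), Lp.coeFn_smul d Θ,
      mulzL_coeFn 1 (f : L2)] with x h1 h2 h3
    show (mulzL 1 (f : L2) - d • Θ : L2) x = zc 1 x * (f : L2) x - d * Θ x
    rw [h1, Pi.sub_apply, h3, h2, Pi.smul_apply, smul_eq_mul]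
  have hubound : ∀ᵐ x ∂μT, ‖((uK : Ksp Θ) : L2) x‖ ≤ C + ‖d‖ := by
    filter_upwards [hcoe, hC, hΘ.2] with x h1 h2 h3
    rw [h1]
    calc ‖zc 1 x * (f : L2) x - d * Θ x‖ ≤ ‖zc 1 x * (f : L2) x‖ + ‖d * Θ x‖ := norm_sub_le _ _
    _ ≤ C + ‖d‖ := by
        rw [norm_mul, norm_mul, zc_norm, one_mul, h3, mul_one]
        exact add_le_add h2 le_rfl
  have hTS := hT uK ⟨C + ‖d‖, hubound⟩
  -- identity of symbols
  have hkey : toL2 (fun x => ψ x * (f : L2) x)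
      = toL2 (fun x => φ x * ((uK : Ksp Θ) : L2) x) + d • toL2 (fun x => φ x * Θ x) := by
    have m1 : MemLp (fun x => φ x * ((uK : Ksp Θ) : L2) x) 2 μT :=
      memℒp_mul_bdd (Lp.memLp φ) (Lp.aestronglyMeasurable _) hubound
    have m2 : MemLp (fun x => φ x * Θ x) 2 μT :=
      memℒp_mul_bdd (Lp.memLp φ) (Lp.aestronglyMeasurable Θ)
        (hΘ.2.mono fun x hx => le_of_eq hx)
    rw [← toL2_smul d m2, ← toL2_add m1 (m2.const_mul d)]
    refine toL2_congr ?_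
    filter_upwards [toL2_coeFn hψmem, hcoe] with x h1 h2
    rw [h1, h2]
    ring
  -- conclude
  show T (Splus f) + ⟪mulzL (-1) Θ, ((f : Ksp Θ) : L2)⟫_ℂ • vΘ = TTOsub Θ ψ (f : L2)
  rw [hSf, hTS]
  show TTOsub Θ φ ((uK : Ksp Θ) : L2) + ⟪mulzL (-1) Θ, ((f : Ksp Θ) : L2)⟫_ℂ • vΘ
      = TTOsub Θ ψ (f : L2)
  unfold TTOsub
  rw [hkey, map_add, (PK Θ).map_smul]
  congr 1
  rw [← d_eq, ← hd]

lemma stepDown {Θ : L2} (hΘ : IsInner Θ) {φ : L2} (hb : IsBddTTO Θ φ) :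
    IsBddTTO Θ (toL2 (fun x => zc (-1) x * φ x)) := by
  obtain ⟨T, hT⟩ := hb
  set ψ : L2 := toL2 (fun x => zc (-1) x * φ x) with hψdef
  have hψmem : MemLp (fun x => zc (-1) x * φ x) 2 μT := memℒp_zc_mul (-1) φ
  set vz : Ksp Θ := PK Θ (toL2 (fun x => zc (-1) x * φ x)) with hvz
  set Smin : Ksp Θ →L[ℂ] Ksp Θ := (PK Θ).comp ((mulzL (-1)).comp (Ksp Θ).subtypeL) with hSmin
  refine ⟨T.comp Smin +
    ContinuousLinearMap.smulRight ((innerSL ℂ (fourierLp 2 0 : L2)).comp (Ksp Θ).subtypeL) vz, ?_⟩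
  intro f hbdd
  obtain ⟨C, hC⟩ := hbdd
  set c : ℂ := fourierCoeff (⇑(f : L2)) 0 with hc
  set uK : Ksp Θ := ⟨mulzL (-1) (f : L2) - c • (fourierLp 2 (-1) : L2), down_mem hΘ f.2⟩ with huK
  have hSf : Smin f = uK := by
    refine Subtype.ext ?_
    rw [hSmin]
    simp only [ContinuousLinearMap.comp_apply, Submodule.subtypeL_apply]
    exact down_proj hΘ f.2
  have hcoe : ⇑((uK : Ksp Θ) : L2) =ᵐ[μT] fun x => zc (-1) x * (f : L2) x - c * zc (-1) x := by
    filter_upwards [Lp.coeFn_sub (mulzL (-1) (f : L2)) (c • (fourierLp 2 (-1) : L2)),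
      Lp.coeFn_smul c (fourierLp 2 (-1) : L2), mulzL_coeFn (-1) (f : L2),
      coeFn_fourierLp 2 (-1)] with x h1 h2 h3 h4
    show (mulzL (-1) (f : L2) - c • (fourierLp 2 (-1) : L2) : L2) x
      = zc (-1) x * (f : L2) x - c * zc (-1) x
    rw [h1, Pi.sub_apply, h3, h2, Pi.smul_apply, h4, smul_eq_mul]
    rfl
  have hubound : ∀ᵐ x ∂μT, ‖((uK : Ksp Θ) : L2) x‖ ≤ C + ‖c‖ := by
    filter_upwards [hcoe, hC] with x h1 h2
    rw [h1]
    calc ‖zc (-1) x * (f : L2) x - c * zc (-1) x‖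
        ≤ ‖zc (-1) x * (f : L2) x‖ + ‖c * zc (-1) x‖ := norm_sub_le _ _
    _ ≤ C + ‖c‖ := by
        rw [norm_mul, norm_mul, zc_norm, one_mul, mul_one]
        exact add_le_add h2 le_rfl
  have hTS := hT uK ⟨C + ‖c‖, hubound⟩
  have hkey : toL2 (fun x => ψ x * (f : L2) x)
      = toL2 (fun x => φ x * ((uK : Ksp Θ) : L2) x)
        + c • toL2 (fun x => zc (-1) x * φ x) := by
    have m1 : MemLp (fun x => φ x * ((uK : Ksp Θ) : L2) x) 2 μT :=
      memℒp_mul_bdd (Lp.memLp φ) (Lp.aestronglyMeasurable _) hubound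
    have m2 : MemLp (fun x => zc (-1) x * φ x) 2 μT := hψmem
    rw [← toL2_smul c m2, ← toL2_add m1 (m2.const_mul c)]
    refine toL2_congr ?_
    filter_upwards [toL2_coeFn hψmem, hcoe] with x h1 h2
    rw [h1, h2]
    ring
  show T (Smin f) + ⟪(fourierLp 2 0 : L2), ((f : Ksp Θ) : L2)⟫_ℂ • vz = TTOsub Θ ψ (f : L2)
  rw [hSf, hTS]
  show TTOsub Θ φ ((uK : Ksp Θ) : L2) + ⟪(fourierLp 2 0 : L2), ((f : Ksp Θ) : L2)⟫_ℂ • vz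
      = TTOsub Θ ψ (f : L2)
  unfold TTOsub
  rw [hkey, map_add, (PK Θ).map_smul]
  congr 1
  rw [inner_fourierLp, ← hc]

end Steps

lemma IsBddTTO_congr {Θ φ φ' : L2} (h : ⇑φ =ᵐ[μT] ⇑φ') (hb : IsBddTTO Θ φ) :
    IsBddTTO Θ φ' := by
  obtain ⟨T, hT⟩ := hb
  refine ⟨T, fun f hf => ?_⟩
  rw [hT f hf]
  unfold TTOsub
  congr 1
  exact toL2_congr (by filter_upwards [h] with x hx; rw [hx])

/-- If `Θ` is inner, `φ ∈ L²` and `A_φ^Θ` is bounded, then `A_{z^j φ}^Θ` is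
bounded for every integer `j`. -/
theorem stmt10 (Θ : L2) (hΘ : IsInner Θ) (φ : L2) (hb : IsBddTTO Θ φ) (j : ℤ) :
    IsBddTTO Θ (toL2 (fun x => zc j x * φ x)) := by
  induction j using Int.induction_on with
  | zero =>
    have h0 : toL2 (fun x => zc 0 x * φ x) = φ := by
      have hae : (fun x => zc 0 x * φ x) =ᵐ[μT] ⇑φ :=
        ae_of_all μT fun x => by simp [zc, fourier_zero]
      rw [toL2_congr hae, toL2_coe]
    rw [h0]; exact hb
  | succ k ih =>
    have hstep := stepUp hΘ ih
    have heq : toL2 (fun x => zc 1 x * (toL2 (fun x => zc (k : ℤ) x * φ x)) x)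
        = toL2 (fun x => zc ((k : ℤ) + 1) x * φ x) := by
      refine toL2_congr ?_
      filter_upwards [toL2_coeFn (memℒp_zc_mul (k : ℤ) φ)] with x hx
      rw [hx, ← mul_assoc, zc_mul, add_comm 1 (k : ℤ)]
    rw [← heq]; exact hstep
  | pred k ih =>
    have hstep := stepDown hΘ ih
    have heq : toL2 (fun x => zc (-1) x * (toL2 (fun x => zc (-(k : ℤ)) x * φ x)) x)
        = toL2 (fun x => zc (-(k : ℤ) - 1) x * φ x) := by
      refine toL2_congr ?_
      filter_upwards [toL2_coeFn (memℒp_zc_mul (-(k : ℤ)) φ)] with x hx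
      rw [hx, ← mul_assoc, zc_mul, show (-1 + -(k : ℤ)) = (-(k : ℤ) - 1) from by ring]
    rw [← heq]; exact hstep

end
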